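/- arXiv:2105.13105 — 3 statements merged into one kernel-verified Lean document; each statement's English description precedes it below -/
import Mathlib

section
/- Let A be a unital ring and a, b ∈ A with ab = ba, ab² = b. Then for every nonnegative integer k, (a - a²b)ᵏ⁺¹ = aᵏ⁺¹(1 - ab), and consequently aᵏ⁺¹b = aᵏ holds if and only if (a - a²b)ᵏ = aᵏ(1-ab) = 0 for k ≥ 1. -/
/-- If `ab = ba` and `ab² = b`, then `(a - a²b)^(k+1) = a^(k+1)(1 - ab)`, and for
`k ≥ 1`, `a^(k+1) b = a^k` holds iff `(a - a²b)^k = a^k (1 - ab) = 0`. -/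
theorem drazin_nilpotent_part {A : Type*} [Ring A] (a b : A)
    (h1 : a * b = b * a) (h2 : a * b ^ 2 = b) :
    (∀ k : ℕ, (a - a ^ 2 * b) ^ (k + 1) = a ^ (k + 1) * (1 - a * b)) ∧
    (∀ k : ℕ, 1 ≤ k →
      ((a - a ^ 2 * b) ^ k = a ^ k * (1 - a * b) ∧
        (a ^ (k + 1) * b = a ^ k ↔ (a - a ^ 2 * b) ^ k = 0))) := by
  have habab : a * b * (a * b) = a * b := by
    calc a * b * (a * b) = a * (b * a) * b := by noncomm_ring
      _ = a * (a * b) * b := by rw [← h1]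
      _ = a * (a * b ^ 2) := by noncomm_ring
      _ = a * b := by rw [h2]
  have he : (1 - a * b) * (1 - a * b) = 1 - a * b := by
    have : (1 - a * b) * (1 - a * b) = 1 - a * b - a * b + a * b * (a * b) := by noncomm_ring
    rw [this, habab]; noncomm_ring
  have hc : (1 - a * b) * a = a * (1 - a * b) := by
    calc (1 - a * b) * a = a - a * (b * a) := by noncomm_ring
      _ = a - a * (a * b) := by rw [← h1]
      _ = a * (1 - a * b) := by noncomm_ring
  have hfac : a - a ^ 2 * b = a * (1 - a * b) := by noncomm_ring
  have main : ∀ k : ℕ, (a - a ^ 2 * b) ^ (k + 1) = a ^ (k + 1) * (1 - a * b) := by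
    intro k
    induction k with
    | zero => simp [hfac]
    | succ n ih =>
        rw [pow_succ, ih, hfac, mul_assoc, ← mul_assoc (1 - a * b), hc,
          mul_assoc a, he, ← mul_assoc, ← pow_succ]
  refine ⟨main, fun k hk => ?_⟩
  obtain ⟨m, rfl⟩ : ∃ m, k = m + 1 := ⟨k - 1, (Nat.succ_pred_eq_of_pos hk).symm⟩
  refine ⟨main m, ?_⟩
  rw [main m]
  constructor
  · intro h
    have : a ^ (m + 1) * (1 - a * b) = a ^ (m + 1) - a ^ (m + 1) * (a * b) := by noncomm_ring
    rw [this, ← mul_assoc, ← pow_succ, h, sub_self]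
  · intro h
    have h' : a ^ (m + 1) - a ^ (m + 2) * b = 0 := by
      have : a ^ (m + 1) - a ^ (m + 2) * b = a ^ (m + 1) * (1 - a * b) := by noncomm_ring
      rw [this, h]
    exact (sub_eq_zero.mp h').symm
end

section
/- Let A be a unital ring and a, b ∈ A commuting elements (ab = ba) that both have Drazin inverses aᵈ and bᵈ. Then ab has a Drazin inverse, and (ab)ᵈ = aᵈbᵈ. -/
/-- `b` is a Drazin inverse of `a` in a unital ring. -/
def IsDrazinInverse {A : Type*} [Ring A] (a b : A) : Prop :=
  a * b = b * a ∧ a * b ^ 2 = b ∧ ∃ k : ℕ, a ^ (k + 1) * b = a ^ k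

private lemma swap_aux {A : Type*} [Ring A] {x y : A} (h : x * y = y * x) (z : A) :
    x * (y * z) = y * (x * z) := by rw [← mul_assoc, h, mul_assoc]

/-- If `c` commutes with `a`, then `c` commutes with any Drazin inverse of `a`. -/
private lemma drazin_comm {A : Type*} [Ring A] {a d c : A} (h1 : a * d = d * a)
    (h2 : a * d ^ 2 = d) {k : ℕ} (h3 : a ^ (k + 1) * d = a ^ k)
    (hc : c * a = a * c) : c * d = d * c := by
  have had : Commute a d := h1
  have hca : Commute c a := hc
  have L1 : ∀ n : ℕ, a ^ n * d ^ (n + 1) = d := by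
    intro n
    induction n with
    | zero => simp
    | succ n ih =>
      rw [pow_succ' a n, pow_succ d (n + 1), mul_assoc, ← mul_assoc (a ^ n), ih,
        ← pow_two, h2]
  have L2 : d ^ (k + 1) * a ^ k = d := by
    rw [(had.symm.pow_pow (k + 1) k).eq]; exact L1 k
  have L4 : a * d * a ^ k = a ^ k := by
    rw [mul_assoc, (had.symm.pow_right k).eq, ← mul_assoc, ← pow_succ']; exact h3
  have L4' : ∀ X : A, a * (d * (a ^ k * X)) = a ^ k * X := fun X => by
    rw [← mul_assoc, ← mul_assoc, L4]
  have h3' : a ^ k * a * d = a ^ k := by rw [← pow_succ]; exact h3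
  have key1 : c * d = a * (d * (c * d)) := by
    calc c * d = c * (a ^ k * d ^ (k + 1)) := by rw [L1]
      _ = a ^ k * (c * d ^ (k + 1)) := swap_aux (hca.pow_right k).eq _
      _ = a * (d * (a ^ k * (c * d ^ (k + 1)))) := (L4' _).symm
      _ = a * (d * (c * (a ^ k * d ^ (k + 1)))) := by
          rw [swap_aux (hca.pow_right k).eq.symm]
      _ = a * (d * (c * d)) := by rw [L1]
  have key2 : d * c = a * (d * (c * d)) := by
    calc d * c = d ^ (k + 1) * a ^ k * c := by rw [L2]
      _ = d ^ (k + 1) * (a ^ k * c) := by rw [mul_assoc]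
      _ = d ^ (k + 1) * (c * a ^ k) := by rw [(hca.symm.pow_left k).eq]
      _ = d ^ (k + 1) * (c * (a ^ k * a * d)) := by rw [h3']
      _ = d ^ (k + 1) * (c * (a ^ k * (a * d))) := by rw [mul_assoc (a ^ k)]
      _ = d ^ (k + 1) * (a ^ k * (c * (a * d))) := by
          rw [swap_aux (hca.pow_right k).eq]
      _ = d ^ (k + 1) * a ^ k * (c * (a * d)) := by rw [mul_assoc]
      _ = d * (c * (a * d)) := by rw [L2]
      _ = d * (a * (c * d)) := by rw [swap_aux hc]
      _ = a * (d * (c * d)) := swap_aux h1.symm _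
  rw [key1, key2]

/-- If `a` and `b` commute and have Drazin inverses `ad` and `bd`, then `ab`
has Drazin inverse `ad bd`. -/
theorem drazin_mul {A : Type*} [Ring A] (a b ad bd : A) (hab : a * b = b * a)
    (ha : IsDrazinInverse a ad) (hb : IsDrazinInverse b bd) :
    IsDrazinInverse (a * b) (ad * bd) := by
  obtain ⟨ha1, ha2, ka, ha3⟩ := ha
  obtain ⟨hb1, hb2, kb, hb3⟩ := hb
  -- derived commutation facts
  have hbad : b * ad = ad * b := drazin_comm ha1 ha2 ha3 hab.symm
  have habd : a * bd = bd * a := drazin_comm hb1 hb2 hb3 hab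
  have hadbd : bd * ad = ad * bd := drazin_comm ha1 ha2 ha3 habd.symm
  set s : Set A := {a, b, ad, bd} with hs
  have hcomm : ∀ x ∈ s, ∀ y ∈ s, x * y = y * x := by
    simp only [hs, Set.mem_insert_iff, Set.mem_singleton_iff]
    rintro x (rfl | rfl | rfl | rfl) y (rfl | rfl | rfl | rfl) <;>
      first
        | rfl
        | assumption
        | (exact hab.symm)
        | (exact ha1.symm)
        | (exact hb1.symm)
        | (exact hbad.symm)
        | (exact habd.symm)
        | (exact hadbd.symm)
  letI : CommRing (Subring.closure s) := Subring.closureCommRingOfComm hcomm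
  have ma : a ∈ Subring.closure s := Subring.subset_closure (by simp [hs])
  have mb : b ∈ Subring.closure s := Subring.subset_closure (by simp [hs])
  have mad : ad ∈ Subring.closure s := Subring.subset_closure (by simp [hs])
  have mbd : bd ∈ Subring.closure s := Subring.subset_closure (by simp [hs])
  set a' : Subring.closure s := ⟨a, ma⟩
  set b' : Subring.closure s := ⟨b, mb⟩
  set ad' : Subring.closure s := ⟨ad, mad⟩
  set bd' : Subring.closure s := ⟨bd, mbd⟩
  have ea2 : a' * ad' ^ 2 = ad' := Subtype.ext (by push_cast; exact ha2)
  have eb2 : b' * bd' ^ 2 = bd' := Subtype.ext (by push_cast; exact hb2)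
  have ea3 : a' ^ (ka + 1) * ad' = a' ^ ka := Subtype.ext (by push_cast; exact ha3)
  have eb3 : b' ^ (kb + 1) * bd' = b' ^ kb := Subtype.ext (by push_cast; exact hb3)
  refine ⟨?_, ?_, ka + kb, ?_⟩
  · have : (a' * b') * (ad' * bd') = (ad' * bd') * (a' * b') := mul_comm _ _
    have := congrArg (Subtype.val) this
    push_cast at this
    exact this
  · have key : (a' * b') * (ad' * bd') ^ 2 = ad' * bd' := by
      have : (a' * b') * (ad' * bd') ^ 2 = (a' * ad' ^ 2) * (b' * bd' ^ 2) := by ring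
      rw [this, ea2, eb2]
    have := congrArg (Subtype.val) key
    push_cast at this
    exact this
  · have key : (a' * b') ^ (ka + kb + 1) * (ad' * bd') = (a' * b') ^ (ka + kb) := by
      have h : (a' * b') ^ (ka + kb + 1) * (ad' * bd')
          = (a' ^ kb * b' ^ ka) * ((a' ^ (ka + 1) * ad') * (b' ^ (kb + 1) * bd')) := by
        ring
      rw [h, ea3, eb3]
      ring
    have := congrArg (Subtype.val) key
    push_cast at this
    exact this
end

section
/- Let X be a module and A : X → X a Drazin invertible linear operator with Drazin inverse Aᵈ and index k. Then X = ker(I - AAᵈ) ⊕ range(I - AAᵈ), both summands are invariant under A, the restriction of A to ker(I - AAᵈ) is bijective, and the restriction of A to range(I - AAᵈ) is nilpotent of index k. -/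
/-- If `A` is Drazin invertible with Drazin inverse `D` and index `k`, then with
`P = 1 - A D`, `X = ker P ⊕ range P`, both summands are `A`-invariant, the
restriction of `A` to `ker P` is bijective (injective and surjective onto `ker P`),
and the restriction of `A` to `range P` is nilpotent of index `k`. -/
theorem decomposition_of_drazin {R X : Type*} [Ring R] [AddCommGroup X] [Module R X]
    (A D : Module.End R X) (k : ℕ)
    (hc : A * D = D * A) (hd : A * D ^ 2 = D)
    (hk : A ^ (k + 1) * D = A ^ k)
    (hmin : ∀ m : ℕ, A ^ (m + 1) * D = A ^ m → k ≤ m) :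
    IsCompl (LinearMap.ker (1 - A * D)) (LinearMap.range (1 - A * D)) ∧
    (∀ x ∈ LinearMap.ker (1 - A * D), A x ∈ LinearMap.ker (1 - A * D)) ∧
    (∀ x ∈ LinearMap.range (1 - A * D), A x ∈ LinearMap.range (1 - A * D)) ∧
    (∀ x ∈ LinearMap.ker (1 - A * D), A x = 0 → x = 0) ∧
    (∀ y ∈ LinearMap.ker (1 - A * D), ∃ x ∈ LinearMap.ker (1 - A * D), A x = y) ∧
    (∀ x ∈ LinearMap.range (1 - A * D), (A ^ k) x = 0) ∧
    (∀ m < k, ∃ x ∈ LinearMap.range (1 - A * D), (A ^ m) x ≠ 0) := by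
  set E : Module.End R X := A * D with hE
  have hAD : A * D = D * A := hE.symm.trans hc
  -- E is idempotent
  have hidem : E * E = E := by
    rw [hE]
    calc A * D * (A * D) = A * (D * A) * D := by noncomm_ring
      _ = A * (A * D) * D := by rw [← hAD]
      _ = A * (A * D ^ 2) := by noncomm_ring
      _ = A * D := by rw [hd]
  have hAE : A * E = E * A := by rw [hE, mul_assoc, hAD, ← mul_assoc]
  have hkerP : ∀ x, x ∈ LinearMap.ker (1 - E) ↔ E x = x := by
    intro x
    rw [LinearMap.mem_ker, LinearMap.sub_apply, Module.End.one_apply]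
    constructor
    · intro h; exact (sub_eq_zero.mp h).symm
    · intro h; rw [h, sub_self]
  refine ⟨⟨?_, ?_⟩, ?_, ?_, ?_, ?_, ?_, ?_⟩
  · -- disjoint
    rw [Submodule.disjoint_def]
    intro x hx hx'
    obtain ⟨y, hy⟩ := hx'
    have h1 : E x = x := (hkerP x).mp hx
    have h2 : E x = 0 := by
      rw [← hy]
      have : E * (1 - E) = 0 := by rw [mul_sub, mul_one, hidem, sub_self]
      calc E ((1 - E) y) = (E * (1 - E)) y := rfl
        _ = 0 := by rw [this]; rfl
    rw [h1] at h2; exact h2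
  · -- codisjoint
    rw [codisjoint_iff, eq_top_iff]
    intro x _
    have hx : x = E x + (1 - E) x := by
      simp [LinearMap.sub_apply]
    rw [hx]
    refine Submodule.add_mem_sup ?_ ?_
    · rw [hkerP]
      calc E (E x) = (E * E) x := rfl
        _ = E x := by rw [hidem]
    · exact ⟨x, rfl⟩
  · -- ker invariant
    intro x hx
    rw [hkerP] at hx ⊢
    calc E (A x) = (E * A) x := rfl
      _ = (A * E) x := by rw [hAE]
      _ = A (E x) := rfl
      _ = A x := by rw [hx]
  · -- range invariant
    intro x hx
    obtain ⟨y, hy⟩ := hx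
    refine ⟨A y, ?_⟩
    have : (1 - E) * A = A * (1 - E) := by rw [sub_mul, mul_sub, one_mul, mul_one, hAE]
    calc (1 - E) (A y) = ((1 - E) * A) y := rfl
      _ = (A * (1 - E)) y := by rw [this]
      _ = A ((1 - E) y) := rfl
      _ = A x := by rw [hy]
  · -- injective on ker
    intro x hx hAx
    rw [hkerP] at hx
    have h1 : E x = (D * A) x := by rw [hE, hAD]
    rw [← hx, h1, Module.End.mul_apply, hAx, map_zero]
  · -- surjective on ker
    intro y hy
    rw [hkerP] at hy
    refine ⟨D y, ?_, ?_⟩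
    · rw [hkerP]
      calc E (D y) = (A * D ^ 2) y := by
            rw [hE, show A * D ^ 2 = A * D * D from by noncomm_ring]; rfl
        _ = D y := by rw [hd]
    · calc A (D y) = E y := rfl
        _ = y := hy
  · -- nilpotent
    intro x hx
    obtain ⟨y, hy⟩ := hx
    have h : A ^ k * (1 - E) = 0 := by
      rw [mul_sub, mul_one, hE, ← mul_assoc, ← pow_succ, hk, sub_self]
    calc (A ^ k) x = (A ^ k) ((1 - E) y) := by rw [hy]
      _ = (A ^ k * (1 - E)) y := rfl
      _ = 0 := by rw [h]; rfl
  · -- minimality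
    intro m hm
    by_contra hcon
    push_neg at hcon
    have : A ^ (m + 1) * D = A ^ m := by
      ext y
      have h0 : (A ^ m) ((1 - E) y) = 0 := hcon _ ⟨y, rfl⟩
      have h1 : (A ^ m) ((1 - E) y) = (A ^ m) y - (A ^ (m+1) * D) y := by
        simp [LinearMap.sub_apply, map_sub, hE, pow_succ, mul_assoc, Module.End.mul_apply]
      rw [h1] at h0
      have := sub_eq_zero.mp h0
      simp [this.symm]
    exact absurd (hmin m this) (not_le.mpr hm)
end
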